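/- Bellman-type identity for the cost square value: for a finite MDP with nonnegative cost C and discount γ ∈ (0,1), the function S_C^π(s) := E[(Σ_{t≥0} γ^t c_t)² | s_0 = s] satisfies S_C^π(s) = E_{a∼π(·|s), s'∼P(·|s,a)}[ C(s,a,s')² + 2γ·C(s,a,s')·V_C^π(s') + γ²·S_C^π(s') ], where V_C^π(s') = E[Σ_{t≥0} γ^t c_t | s_0 = s']. -/

import Mathlib

open Finset

/-- The state at time `t` along a trajectory starting at `s0` whose `t`-th transition is
`w t = (aₜ, sₜ₊₁)`. -/
def stSeq {S A : Type*} (s0 : S) (w : ℕ → A × S) : ℕ → S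
  | 0 => s0
  | t + 1 => (w t).2

/-- Extend a finite path `w : Fin n → A × S` to an infinite sequence by a default value. -/
def extPath {S A : Type*} [Inhabited S] [Inhabited A] (n : ℕ) (w : Fin n → A × S) :
    ℕ → A × S :=
  fun t => if h : t < n then w ⟨t, h⟩ else default

/-- Probability weight of the first `n` steps of the trajectory `w` from `s0` under policy
`π` and transition kernel `P`. -/
def pathWt {S A : Type*} (π : S → A → ℝ) (P : S → A → S → ℝ) (s0 : S)
    (w : ℕ → A × S) (n : ℕ) : ℝ :=
  ∏ t ∈ Finset.range n, π (stSeq s0 w t) (w t).1 * P (stSeq s0 w t) (w t).1 (w t).2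

/-- Discounted cost accumulated over the first `n` steps of the trajectory `w` from `s0`. -/
def pathCost {S A : Type*} (C : S → A → S → ℝ) (γ : ℝ) (s0 : S)
    (w : ℕ → A × S) (n : ℕ) : ℝ :=
  ∑ t ∈ Finset.range n, γ ^ t * C (stSeq s0 w t) (w t).1 (w t).2

/-- `n`-horizon expectation of the discounted cost sum from `s0`. -/
def cExp {S A : Type*} [Fintype S] [Fintype A] [Inhabited S] [Inhabited A]
    (π : S → A → ℝ) (P : S → A → S → ℝ) (C : S → A → S → ℝ) (γ : ℝ)
    (n : ℕ) (s0 : S) : ℝ :=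
  ∑ w : Fin n → A × S,
    pathWt π P s0 (extPath n w) n * pathCost C γ s0 (extPath n w) n

/-- `n`-horizon expectation of the squared discounted cost sum from `s0`. -/
def sqExp {S A : Type*} [Fintype S] [Fintype A] [Inhabited S] [Inhabited A]
    (π : S → A → ℝ) (P : S → A → S → ℝ) (C : S → A → S → ℝ) (γ : ℝ)
    (n : ℕ) (s0 : S) : ℝ :=
  ∑ w : Fin n → A × S,
    pathWt π P s0 (extPath n w) n * (pathCost C γ s0 (extPath n w) n) ^ 2


section Aux

variable {S A : Type*} [Inhabited S] [Inhabited A]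

lemma extPath_succ (n : ℕ) (x : A × S) (w : Fin n → A × S) (t : ℕ) :
    extPath (n + 1) (Fin.cons x w) (t + 1) = extPath n w t := by
  unfold extPath
  by_cases h : t < n
  · rw [dif_pos h, dif_pos (Nat.succ_lt_succ h)]
    exact Fin.cons_succ (α := fun _ : Fin (n + 1) => A × S) x w ⟨t, h⟩
  · rw [dif_neg h, dif_neg (by omega)]

lemma extPath_zero (n : ℕ) (x : A × S) (w : Fin n → A × S) :
    extPath (n + 1) (Fin.cons x w) 0 = x := by
  unfold extPath
  rw [dif_pos (Nat.succ_pos n)]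
  exact Fin.cons_zero (α := fun _ : Fin (n + 1) => A × S) x w

lemma stSeq_shift (n : ℕ) (s0 : S) (x : A × S) (w : Fin n → A × S) (t : ℕ) :
    stSeq s0 (extPath (n + 1) (Fin.cons x w)) (t + 1) = stSeq x.2 (extPath n w) t := by
  cases t with
  | zero =>
    show (extPath (n + 1) (Fin.cons x w) 0).2 = x.2
    rw [extPath_zero]
  | succ u =>
    show (extPath (n + 1) (Fin.cons x w) (u + 1)).2 = (extPath n w u).2
    rw [extPath_succ]

lemma pathWt_succ (π : S → A → ℝ) (P : S → A → S → ℝ) (n : ℕ) (s0 : S)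
    (x : A × S) (w : Fin n → A × S) :
    pathWt π P s0 (extPath (n + 1) (Fin.cons x w)) (n + 1)
      = π s0 x.1 * P s0 x.1 x.2 * pathWt π P x.2 (extPath n w) n := by
  unfold pathWt
  rw [Finset.prod_range_succ', mul_comm]
  congr 1
  · apply Finset.prod_congr rfl
    intro t _
    rw [extPath_succ, stSeq_shift]

lemma pathCost_succ (C : S → A → S → ℝ) (γ : ℝ) (n : ℕ) (s0 : S)
    (x : A × S) (w : Fin n → A × S) :
    pathCost C γ s0 (extPath (n + 1) (Fin.cons x w)) (n + 1)
      = C s0 x.1 x.2 + γ * pathCost C γ x.2 (extPath n w) n := by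
  unfold pathCost
  rw [Finset.sum_range_succ', add_comm]
  congr 1
  · show γ ^ 0 * C (stSeq s0 _ 0) _ _ = _
    rw [show stSeq s0 (extPath (n+1) (Fin.cons x w)) 0 = s0 from rfl, extPath_zero,
      pow_zero, one_mul]
  · rw [Finset.mul_sum]
    apply Finset.sum_congr rfl
    intro t _
    rw [extPath_succ, stSeq_shift, pow_succ]
    ring

lemma sum_succ_decomp {β : Type*} [Fintype β] (n : ℕ) (f : (Fin (n + 1) → β) → ℝ) :
    ∑ w : Fin (n + 1) → β, f w = ∑ x : β, ∑ w : Fin n → β, f (Fin.cons x w) := by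
  rw [← Equiv.sum_comp (Fin.consEquiv fun _ => β) f, Fintype.sum_prod_type]
  rfl

variable [Fintype S] [Fintype A]

lemma pathWt_sum (π : S → A → ℝ) (P : S → A → S → ℝ)
    (hπ1 : ∀ s, ∑ a, π s a = 1) (hP1 : ∀ s a, ∑ s', P s a s' = 1) :
    ∀ (n : ℕ) (s : S), ∑ w : Fin n → A × S, pathWt π P s (extPath n w) n = 1 := by
  intro n
  induction n with
  | zero => intro s; simp [pathWt]
  | succ n ih =>
    intro s
    rw [sum_succ_decomp]
    have : ∀ x : A × S, ∑ w : Fin n → A × S,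
        pathWt π P s (extPath (n + 1) (Fin.cons x w)) (n + 1)
        = π s x.1 * P s x.1 x.2 := by
      intro x
      simp only [pathWt_succ, ← Finset.mul_sum, ih x.2, mul_one]
    simp only [this, Fintype.sum_prod_type, ← Finset.mul_sum, hP1, mul_one, hπ1]

lemma sqExp_succ (π : S → A → ℝ) (P : S → A → S → ℝ) (C : S → A → S → ℝ) (γ : ℝ)
    (hπ1 : ∀ s, ∑ a, π s a = 1) (hP1 : ∀ s a, ∑ s', P s a s' = 1) (n : ℕ) (s : S) :
    sqExp π P C γ (n + 1) s = ∑ a, π s a * ∑ s', P s a s' *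
      (C s a s' ^ 2 + 2 * γ * C s a s' * cExp π P C γ n s'
        + γ ^ 2 * sqExp π P C γ n s') := by
  conv_lhs => unfold sqExp
  rw [sum_succ_decomp]
  have key : ∀ x : A × S, ∑ w : Fin n → A × S,
      pathWt π P s (extPath (n + 1) (Fin.cons x w)) (n + 1) *
        pathCost C γ s (extPath (n + 1) (Fin.cons x w)) (n + 1) ^ 2
      = π s x.1 * P s x.1 x.2 * (C s x.1 x.2 ^ 2
          + 2 * γ * C s x.1 x.2 * cExp π P C γ n x.2 + γ ^ 2 * sqExp π P C γ n x.2) := by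
    intro x
    have h1 : ∀ w : Fin n → A × S,
        pathWt π P s (extPath (n + 1) (Fin.cons x w)) (n + 1) *
          pathCost C γ s (extPath (n + 1) (Fin.cons x w)) (n + 1) ^ 2
        = (π s x.1 * P s x.1 x.2 * C s x.1 x.2 ^ 2) * pathWt π P x.2 (extPath n w) n
          + (π s x.1 * P s x.1 x.2 * (2 * γ * C s x.1 x.2)) *
              (pathWt π P x.2 (extPath n w) n * pathCost C γ x.2 (extPath n w) n)
          + (π s x.1 * P s x.1 x.2 * γ ^ 2) *
              (pathWt π P x.2 (extPath n w) n * pathCost C γ x.2 (extPath n w) n ^ 2) := by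
      intro w
      rw [pathWt_succ, pathCost_succ]
      ring
    simp only [h1, Finset.sum_add_distrib, ← Finset.mul_sum,
      pathWt_sum π P hπ1 hP1 n x.2]
    unfold cExp sqExp
    ring
  simp only [key, Fintype.sum_prod_type]
  apply Finset.sum_congr rfl
  intro a _
  rw [Finset.mul_sum]
  exact Finset.sum_congr rfl fun s' _ => by ring

end Aux
/-- Bellman-type identity for the cost square value: if `V_C^π(s)` and `S_C^π(s)` are the
limits of the finite-horizon expectations of the discounted cost sum and its square, then
`S_C^π(s) = E_{a∼π(·|s), s'∼P(·|s,a)}[C(s,a,s')² + 2γ·C(s,a,s')·V_C^π(s') + γ²·S_C^π(s')]`. -/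
theorem cost_square_bellman {S A : Type*} [Fintype S] [Fintype A] [Inhabited S] [Inhabited A]
    (π : S → A → ℝ) (P : S → A → S → ℝ) (C : S → A → S → ℝ) (γ : ℝ)
    (hπ0 : ∀ s a, 0 ≤ π s a) (hπ1 : ∀ s, ∑ a, π s a = 1)
    (hP0 : ∀ s a s', 0 ≤ P s a s') (hP1 : ∀ s a, ∑ s', P s a s' = 1)
    (hC0 : ∀ s a s', 0 ≤ C s a s') (hCb : ∃ M, ∀ s a s', C s a s' ≤ M)
    (hγ : γ ∈ Set.Ioo (0 : ℝ) 1)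
    (VC SC : S → ℝ)
    (hVC : ∀ s, Filter.Tendsto (fun n => cExp π P C γ n s) Filter.atTop (nhds (VC s)))
    (hSC : ∀ s, Filter.Tendsto (fun n => sqExp π P C γ n s) Filter.atTop (nhds (SC s))) :
    ∀ s, SC s = ∑ a, π s a * ∑ s', P s a s' *
      (C s a s' ^ 2 + 2 * γ * C s a s' * VC s' + γ ^ 2 * SC s') := by
  intro s
  have h1 : Filter.Tendsto (fun n => sqExp π P C γ (n + 1) s) Filter.atTop (nhds (SC s)) :=
    (hSC s).comp (Filter.tendsto_add_atTop_nat 1)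
  have h3 : (fun n => sqExp π P C γ (n + 1) s)
      = fun n => ∑ a, π s a * ∑ s', P s a s' *
        (C s a s' ^ 2 + 2 * γ * C s a s' * cExp π P C γ n s'
          + γ ^ 2 * sqExp π P C γ n s') :=
    funext fun n => sqExp_succ π P C γ hπ1 hP1 n s
  rw [h3] at h1
  have h2 : Filter.Tendsto (fun n => ∑ a, π s a * ∑ s', P s a s' *
      (C s a s' ^ 2 + 2 * γ * C s a s' * cExp π P C γ n s'
        + γ ^ 2 * sqExp π P C γ n s'))
      Filter.atTop (nhds (∑ a, π s a * ∑ s', P s a s' *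
      (C s a s' ^ 2 + 2 * γ * C s a s' * VC s' + γ ^ 2 * SC s'))) := by
    apply tendsto_finset_sum
    intro a _
    apply Filter.Tendsto.const_mul
    apply tendsto_finset_sum
    intro s' _
    apply Filter.Tendsto.const_mul
    exact (tendsto_const_nhds.add ((hVC s').const_mul _)).add ((hSC s').const_mul _)
  exact tendsto_nhds_unique h1 h2
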